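/- Fix m ≥ 1 and formal variables x_0, …, x_m, and for each i ≥ 1 let F^i(x_0, …, x_m, t) = f_{x_0 + x_1 t + ⋯ + x_m t^m}^i(t) ∈ ℚ[x_0, …, x_m, t]. Let N be a natural number with N ≥ m+2 and let G ∈ ℚ[x_0, …, x_m, t]. Then G divides F^i for every i with N+1 ≤ i ≤ 2N−1 if and only if G divides F^i for every i ≥ N+1. -/
import Mathlib


open Polynomial in
/-- The sequence of polynomials `f_S^i` associated to a coefficient sequence `s`. -/
noncomputable def fseq {R : Type*} [CommRing R] [Algebra ℚ R] (s : ℕ → R) : ℕ → Polynomial R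
  | 0 => 0
  | 1 => C (s 0)
  | (k+2) =>
      ((((k : ℚ)+2)^2)⁻¹) •
        (C (s (k+1)) + Polynomial.X *
          ∑ i ∈ (Finset.range (k+1)).attach,
            (C (s i.1) - ((((i.1 : ℤ))+1) * (2*(i.1 : ℤ)+1-((k : ℤ)+1))) • fseq s (i.1+1) ) *
              fseq s (k+1-i.1))
  termination_by k => k
  decreasing_by
  all_goals (first
    | omega
    | (have h := i.2; rw [Finset.mem_range] at h; omega))

/-- The polynomials `F^i(x_0,…,x_m,t) = f_{x_0 + x_1 t + ⋯ + x_m t^m}^i(t)`, regarded as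
elements of `ℚ[x_0,…,x_m][t]`. -/
noncomputable def Fpoly (m : ℕ) (i : ℕ) : Polynomial (MvPolynomial (Fin (m + 1)) ℚ) :=
  fseq (fun j => if h : j < m + 1 then MvPolynomial.X (⟨j, h⟩ : Fin (m + 1)) else 0) i

/-- Fix `m ≥ 1` and `N ≥ m+2`, and let `G ∈ ℚ[x_0,…,x_m,t]`.
Then `G` divides `F^i` for every `N+1 ≤ i ≤ 2N−1` if and only if `G` divides `F^i`
for every `i ≥ N+1`. -/
theorem stmt7 (m : ℕ) (hm : 1 ≤ m) (N : ℕ) (hN : m + 2 ≤ N)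
    (G : Polynomial (MvPolynomial (Fin (m + 1)) ℚ)) :
    (∀ i : ℕ, N + 1 ≤ i → i ≤ 2 * N - 1 → G ∣ Fpoly m i) ↔
      (∀ i : ℕ, N + 1 ≤ i → G ∣ Fpoly m i) := by
  set s : ℕ → MvPolynomial (Fin (m+1)) ℚ :=
    fun j => if h : j < m + 1 then MvPolynomial.X (⟨j, h⟩ : Fin (m + 1)) else 0 with hs
  have hs0 : ∀ j, m + 1 ≤ j → s j = 0 := by
    intro j hj; simp only [hs]; rw [dif_neg]; omega
  have hqsmul : ∀ (q : ℚ) (p : Polynomial (MvPolynomial (Fin (m+1)) ℚ)),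
      G ∣ p → G ∣ q • p := by
    intro q p hp
    rw [Algebra.smul_def]
    exact hp.mul_left _
  have hzsmul : ∀ (c : ℤ) (p : Polynomial (MvPolynomial (Fin (m+1)) ℚ)),
      G ∣ p → G ∣ c • p := by
    intro c p hp
    rw [zsmul_eq_mul]
    exact hp.mul_left _
  constructor
  · intro H i
    induction i using Nat.strong_induction_on with
    | _ i IH =>
      intro hi
      by_cases hle : i ≤ 2 * N - 1
      · exact H i hi hle
      · obtain ⟨k, rfl⟩ : ∃ k, i = k + 2 := ⟨i - 2, by omega⟩
        have hk : 2 * N ≤ k + 2 := by omega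
        rw [Fpoly, fseq]
        apply hqsmul
        rw [dif_neg (show ¬(k + 1 < m + 1) by omega), map_zero, zero_add]
        apply Dvd.dvd.mul_left
        apply Finset.dvd_sum
        intro j _
        have hjk : j.1 < k + 1 := by have := j.2; rwa [Finset.mem_range] at this
        by_cases hA : N ≤ j.1
        · -- first factor divisible: s j.1 = 0 and fseq (j.1+1) divisible by IH
          apply dvd_mul_of_dvd_left
          rw [dif_neg (show ¬(j.1 < m + 1) by omega), map_zero]
          apply dvd_sub (dvd_zero G)
          apply hzsmul
          have := IH (j.1 + 1) (by omega) (by omega)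
          rwa [Fpoly] at this
        · by_cases hB : N + 1 ≤ k + 1 - j.1
          · apply dvd_mul_of_dvd_right
            have := IH (k + 1 - j.1) (by omega) (by omega)
            rwa [Fpoly] at this
          · -- forced: j.1 = N - 1, k + 2 = 2N, coefficient vanishes
            have hj1 : j.1 = N - 1 := by omega
            have hk2 : k + 2 = 2 * N := by omega
            apply dvd_mul_of_dvd_left
            have hc : (2*(j.1 : ℤ)+1-((k : ℤ)+1)) = 0 := by omega
            rw [dif_neg (show ¬(j.1 < m + 1) by omega), map_zero, zero_sub, hc, mul_zero, zero_smul, neg_zero]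
            exact dvd_zero G
  · intro H i hi _
    exact H i hi
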